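/- Let X = X₁₈ ⊂ P(1,2,3,5,9) be a Fano weighted hypersurface with (A³) = 1/15 where A is the ample generator of the class group, and let ψ : Y → X be the Kawamata blow-up at a terminal quotient singular point of type ⅓(1,1,2) with exceptional divisor E, so that (E³) = 9/2 and discrepancy a_E(K_X) = 1/3. If S̃ ∼_ℚ ψ*A − (2/3)E and T̃ ∼_ℚ 2ψ*A − (1/3)E, then (T̃² · S̃) = 4/15 − (2/27)(9/2) < 0. -/

import Mathlib

section aux
variable {V : Type*} [AddCommGroup V] [Module ℚ V]
  (I : MultilinearMap ℚ (fun _ : Fin 3 => V) ℚ)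

private lemma upd0 (x b c y : V) : Function.update ![x, b, c] 0 y = ![y, b, c] := by
  funext i; fin_cases i <;> simp
private lemma upd1 (a x c y : V) : Function.update ![a, x, c] 1 y = ![a, y, c] := by
  funext i; fin_cases i <;> simp [Function.update]
private lemma upd2 (a b x y : V) : Function.update ![a, b, x] 2 y = ![a, b, y] := by
  funext i; fin_cases i <;> simp [Function.update]

private lemma sub0 (x y b c : V) : I ![x - y, b, c] = I ![x, b, c] - I ![y, b, c] := by
  have := I.map_update_sub ![x, b, c] 0 x y
  simpa [upd0] using this
private lemma sub1 (a x y c : V) : I ![a, x - y, c] = I ![a, x, c] - I ![a, y, c] := by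
  have := I.map_update_sub ![a, x, c] 1 x y
  simpa [upd1] using this
private lemma sub2 (a b x y : V) : I ![a, b, x - y] = I ![a, b, x] - I ![a, b, y] := by
  have := I.map_update_sub ![a, b, x] 2 x y
  simpa [upd2] using this
private lemma smul0 (r : ℚ) (x b c : V) : I ![r • x, b, c] = r * I ![x, b, c] := by
  have := I.map_update_smul ![x, b, c] 0 r x
  simpa [upd0] using this
private lemma smul1 (r : ℚ) (a x c : V) : I ![a, r • x, c] = r * I ![a, x, c] := by
  have := I.map_update_smul ![a, x, c] 1 r x
  simpa [upd1] using this
private lemma smul2 (r : ℚ) (a b x : V) : I ![a, b, r • x] = r * I ![a, b, x] := by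
  have := I.map_update_smul ![a, b, x] 2 r x
  simpa [upd2] using this
end aux

/-- The intersection-number computation excluding the `⅓(1,1,2)` point of
`X₁₈ ⊂ P(1,2,3,5,9)` as a maximal center.  The intersection pairing on the
Kawamata blow-up `Y` is a trilinear form `I` determined by
`(ψ*A)³ = (A³) = 1/15`, all mixed products of `ψ*A` and `E` vanish, and
`(E³) = 9/2`.  For `S̃ = ψ*A − (2/3)E` and `T̃ = 2ψ*A − (1/3)E` one has
`(T̃²·S̃) = 4/15 − (2/27)·(9/2) < 0`. -/
theorem intersection_number_negative
    {V : Type*} [AddCommGroup V] [Module ℚ V]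
    (I : MultilinearMap ℚ (fun _ : Fin 3 => V) ℚ) (A E : V)
    (hAAA : I ![A, A, A] = 1 / 15)
    (hAAE : I ![A, A, E] = 0) (hAEA : I ![A, E, A] = 0) (hEAA : I ![E, A, A] = 0)
    (hAEE : I ![A, E, E] = 0) (hEAE : I ![E, A, E] = 0) (hEEA : I ![E, E, A] = 0)
    (hEEE : I ![E, E, E] = 9 / 2)
    (S T : V)
    (hS : S = A - (2 / 3 : ℚ) • E)
    (hT : T = (2 : ℚ) • A - (1 / 3 : ℚ) • E) :
    I ![T, T, S] = 4 / 15 - (2 / 27) * (9 / 2) ∧ I ![T, T, S] < 0 := by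
  subst hS hT
  have h : I ![(2 : ℚ) • A - (1 / 3 : ℚ) • E, (2 : ℚ) • A - (1 / 3 : ℚ) • E,
      A - (2 / 3 : ℚ) • E] = 4 / 15 - (2 / 27) * (9 / 2) := by
    simp only [sub0, sub1, sub2, smul0, smul1, smul2,
      hAAA, hAAE, hAEA, hEAA, hAEE, hEAE, hEEA, hEEE]
    ring
  exact ⟨h, by rw [h]; norm_num⟩
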